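/- Fix N ∈ ℕ, α > 0, r > 0, ν > 0, and T > 0. Suppose u ∈ C¹([0,T]; E_N) satisfies, for all t ∈ [0,T], the Galerkin fractional Navier–Stokes–Voigt system (I + α^{2r} A^r) u'(t) + ν A u(t) = − P_N P_σ((u(t)·∇)u(t)), where A = A¹. Then for all t ∈ [0,T], ‖u(t)‖_{L²}² + α^{2r} ‖A^{r/2} u(t)‖_{L²}² + 2ν ∫₀ᵗ ‖A^{1/2} u(s)‖_{L²}² ds = ‖u(0)‖_{L²}² + α^{2r} ‖A^{r/2} u(0)‖_{L²}². -/

import Mathlib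

noncomputable section

/-- Fourier coefficient families for trigonometric polynomials on `T³ = ℝ³/ℤ³`:
`c k ∈ ℂ³` is the coefficient of `e^{2πi k·x}`. -/
abbrev Coeffs := (Fin 3 → ℤ) → Fin 3 → ℂ

/-- `|k|² = ∑ i, kᵢ²`. -/
def ksq (k : Fin 3 → ℤ) : ℤ := ∑ i, (k i) ^ 2

/-- The eigenvalue `|2πk|²` of `A` at wavenumber `k`. -/
def mu (k : Fin 3 → ℤ) : ℝ := (2 * Real.pi) ^ 2 * (ksq k : ℝ)

/-- Membership in the Galerkin space `E_N`: real-valued (conjugate symmetric),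
divergence-free (`k·ĉ_k = 0`), mean-free and supported on `0 < |k| ≤ N`. -/
def memEN (N : ℕ) (c : Coeffs) : Prop :=
  (∀ k j, c (-k) j = starRingEnd ℂ (c k j)) ∧
  (∀ k, ∑ i, (k i : ℂ) * c k i = 0) ∧
  (∀ k, (k = 0 ∨ ((N : ℤ) ^ 2 < ksq k)) → c k = 0)

/-- The lattice box `{k : |kᵢ| ≤ N for each i}`, containing all active modes. -/
def box (N : ℕ) : Finset (Fin 3 → ℤ) :=
  Finset.Icc (fun _ => -(N : ℤ)) (fun _ => (N : ℤ))

/-- The `k`-th Fourier coefficient of the nonlinearity `(u·∇)u` for `u ∈ E_N` with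
coefficients `c`:  `∑_{m+n=k} (2πi ∑ᵢ (c m)ᵢ nᵢ) (c n)ⱼ`. -/
def nonlinCoeff (N : ℕ) (c : Coeffs) (k : Fin 3 → ℤ) : Fin 3 → ℂ :=
  fun j => ∑ n ∈ box N, (2 * Real.pi * Complex.I * ∑ i, c (k - n) i * (n i : ℂ)) * c n j

/-- Orthogonal projection of `v ∈ ℂ³` onto the plane orthogonal to `k`. -/
def projPerp (k : Fin 3 → ℤ) (v : Fin 3 → ℂ) : Fin 3 → ℂ :=
  fun j => v j - ((∑ i, (k i : ℂ) * v i) / (ksq k : ℂ)) * (k j : ℂ)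

/-- The coefficients of `P_N P_σ((u·∇)u)` for `u ∈ E_N` with coefficients `c`. -/
def BN (N : ℕ) (c : Coeffs) (k : Fin 3 → ℤ) : Fin 3 → ℂ :=
  if k ≠ 0 ∧ ksq k ≤ (N : ℤ) ^ 2 then projPerp k (nonlinCoeff N c k) else 0

/-- `‖u‖_{L²}² = ∑_{0<|k|≤N} |ĉ_k|²` (Parseval). -/
def l2sq (N : ℕ) (c : Coeffs) : ℝ :=
  ∑ k ∈ box N, ∑ j, Complex.normSq (c k j)

/-- `‖A^{r/2}u‖_{L²}² = ∑_{0<|k|≤N} |2πk|^{2r} |ĉ_k|²`. -/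
def arsq (N : ℕ) (r : ℝ) (c : Coeffs) : ℝ :=
  ∑ k ∈ box N, mu k ^ r * ∑ j, Complex.normSq (c k j)

end

lemma neg_mem_box' {N : ℕ} {k : Fin 3 → ℤ} (h : k ∈ box N) : -k ∈ box N := by
  simp only [box, Finset.mem_Icc, Pi.le_def] at h ⊢
  constructor <;> intro i
  · simpa using neg_le_neg (h.2 i)
  · simpa using neg_le_neg (h.1 i)

lemma inner_nonlin_zero' (N : ℕ) (c : Coeffs)
    (hsymm : ∀ k j, c (-k) j = starRingEnd ℂ (c k j))
    (hdiv : ∀ k, ∑ i, (k i : ℂ) * c k i = 0) :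
    ∑ k ∈ box N, ∑ j, starRingEnd ℂ (c k j) * nonlinCoeff N c k j = 0 := by
  set g : (Fin 3 → ℤ) × (Fin 3 → ℤ) → ℂ := fun p =>
    (2 * Real.pi * Complex.I * ∑ i, c (p.1 - p.2) i * (p.2 i : ℂ)) *
      ∑ j, starRingEnd ℂ (c p.1 j) * c p.2 j with hg
  have hS : ∑ k ∈ box N, ∑ j, starRingEnd ℂ (c k j) * nonlinCoeff N c k j
      = ∑ p ∈ (box N) ×ˢ (box N), g p := by
    rw [Finset.sum_product]
    refine Finset.sum_congr rfl fun k _ => ?_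
    simp only [nonlinCoeff, Finset.mul_sum]
    rw [Finset.sum_comm]
    refine Finset.sum_congr rfl fun n _ => ?_
    simp only [hg, Finset.mul_sum]
    refine Finset.sum_congr rfl fun j _ => ?_
    ring
  have hneg : ∀ p ∈ (box N) ×ˢ (box N), g (-p.2, -p.1) = -g p := by
    rintro ⟨k, n⟩ _
    have h2 : (∑ j, starRingEnd ℂ (c (-n) j) * c (-k) j)
        = ∑ j, starRingEnd ℂ (c k j) * c n j := by
      refine Finset.sum_congr rfl fun j _ => ?_
      rw [hsymm n j, hsymm k j]
      simp [mul_comm]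
    have hz : (∑ i, c (k - n) i * ((n i : ℂ) - (k i : ℂ))) = 0 := by
      have hdd : (∑ i, c (k - n) i * ((n i : ℂ) - (k i : ℂ))) =
          - ∑ i, (((k - n) i : ℤ) : ℂ) * c (k - n) i := by
        rw [← Finset.sum_neg_distrib]
        refine Finset.sum_congr rfl fun i _ => ?_
        simp only [Pi.sub_apply, Int.cast_sub]
        ring
      rw [hdd, hdiv (k - n)]; ring
    simp only [hg]
    have harg : (-n : Fin 3 → ℤ) - (-k) = k - n := neg_sub_neg n k
    rw [harg, h2]
    have hsum : (∑ i, c (k - n) i * (((-k) i : ℤ) : ℂ)) = - ∑ i, c (k - n) i * (n i : ℂ) := by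
      have hterm : ∀ i, c (k - n) i * (((-k) i : ℤ) : ℂ)
          = c (k - n) i * ((n i : ℂ) - (k i : ℂ)) - c (k - n) i * (n i : ℂ) := fun i => by
        simp only [Pi.neg_apply, Int.cast_neg]; ring
      rw [Finset.sum_congr rfl fun i _ => hterm i, Finset.sum_sub_distrib, hz]; ring
    rw [hsum]; ring
  have hbij : ∑ p ∈ (box N) ×ˢ (box N), g p = ∑ p ∈ (box N) ×ˢ (box N), g (-p.2, -p.1) := by
    refine Finset.sum_nbij' (i := fun p => (-p.2, -p.1)) (j := fun p => (-p.2, -p.1)) ?_ ?_ ?_ ?_ ?_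
    · rintro ⟨k, n⟩ hp
      simp only [Finset.mem_product] at hp ⊢
      exact ⟨neg_mem_box' hp.2, neg_mem_box' hp.1⟩
    · rintro ⟨k, n⟩ hp
      simp only [Finset.mem_product] at hp ⊢
      exact ⟨neg_mem_box' hp.2, neg_mem_box' hp.1⟩
    · rintro ⟨k, n⟩ _; simp
    · rintro ⟨k, n⟩ _; simp
    · rintro ⟨k, n⟩ _; simp
  have hSS : ∑ p ∈ (box N) ×ˢ (box N), g p = - ∑ p ∈ (box N) ×ˢ (box N), g p := by
    nth_rewrite 1 [hbij]
    rw [← Finset.sum_neg_distrib]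
    exact Finset.sum_congr rfl hneg
  rw [hS]
  have h2 : (2 : ℂ) * ∑ p ∈ (box N) ×ˢ (box N), g p = 0 := by
    rw [two_mul]; exact add_eq_zero_iff_eq_neg.mpr hSS
  exact (mul_eq_zero.mp h2).resolve_left two_ne_zero

lemma inner_BN_zero' (N : ℕ) (c : Coeffs) (h : memEN N c) :
    ∑ k ∈ box N, ∑ j, starRingEnd ℂ (c k j) * BN N c k j = 0 := by
  obtain ⟨hs, hd, hsupp⟩ := h
  have key : ∀ k ∈ box N, ∑ j, starRingEnd ℂ (c k j) * BN N c k j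
      = ∑ j, starRingEnd ℂ (c k j) * nonlinCoeff N c k j := by
    intro k _
    by_cases hk : k ≠ 0 ∧ ksq k ≤ (N : ℤ) ^ 2
    · simp only [BN, if_pos hk, projPerp]
      have hk0 : ∑ j, starRingEnd ℂ (c k j) * (k j : ℂ) = 0 := by
        have := congrArg (starRingEnd ℂ) (hd k)
        simp only [map_sum, map_mul, map_zero] at this
        rw [← this]
        exact Finset.sum_congr rfl fun j _ => by
          rw [show ((starRingEnd ℂ) ((k j : ℤ) : ℂ)) = ((k j : ℤ) : ℂ) from map_intCast _ _]
          ring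
      have hterm : ∀ j, starRingEnd ℂ (c k j) *
            (nonlinCoeff N c k j - ((∑ i, (k i : ℂ) * nonlinCoeff N c k i) / (ksq k : ℂ)) * (k j : ℂ))
          = starRingEnd ℂ (c k j) * nonlinCoeff N c k j
            - ((∑ i, (k i : ℂ) * nonlinCoeff N c k i) / (ksq k : ℂ)) * (starRingEnd ℂ (c k j) * (k j : ℂ)) :=
        fun j => by ring
      rw [Finset.sum_congr rfl fun j _ => hterm j, Finset.sum_sub_distrib, ← Finset.mul_sum, hk0]
      ring
    · have hc : c k = 0 := by
        rcases not_and_or.mp hk with h0 | hlt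
        · push_neg at h0; exact hsupp k (Or.inl h0)
        · exact hsupp k (Or.inr (lt_of_not_ge hlt))
      simp [BN, if_neg hk, hc]
  rw [Finset.sum_congr rfl key]
  exact inner_nonlin_zero' N c hs hd

lemma hasDerivWithinAt_normSq' {f : ℝ → ℂ} {f' : ℂ} {s : Set ℝ} {t : ℝ}
    (h : HasDerivWithinAt f f' s t) :
    HasDerivWithinAt (fun x => Complex.normSq (f x))
      (2 * ((starRingEnd ℂ (f t)) * f').re) s t := by
  have hre : HasDerivWithinAt (fun x => (f x).re) f'.re s t :=
    (Complex.reCLM.hasFDerivAt.comp_hasDerivWithinAt t h)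
  have him : HasDerivWithinAt (fun x => (f x).im) f'.im s t :=
    (Complex.imCLM.hasFDerivAt.comp_hasDerivWithinAt t h)
  have h2 := (hre.mul hre).add (him.mul him)
  simp only [Complex.normSq_apply]
  convert h2 using 1
  · rfl
  · rfl
  · rfl
  simp [Complex.mul_re]; ring

/-- Energy identity for the Galerkin fractional Navier–Stokes–Voigt system:
if `u ∈ C¹([0,T]; E_N)` (represented by its coefficient family `c`, with derivative `d`)
solves `(I + α^{2r}A^r) u' + νAu = -P_N P_σ((u·∇)u)`, then for all `t ∈ [0,T]`,
`‖u(t)‖² + α^{2r}‖A^{r/2}u(t)‖² + 2ν∫₀ᵗ ‖A^{1/2}u(s)‖² ds = ‖u(0)‖² + α^{2r}‖A^{r/2}u(0)‖²`. -/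
theorem galerkin_fNSV_energy_identity
    (N : ℕ) (α r ν T : ℝ) (hα : 0 < α) (hr : 0 < r) (hν : 0 < ν) (hT : 0 < T)
    (c d : ℝ → Coeffs)
    (hmem : ∀ t ∈ Set.Icc (0 : ℝ) T, memEN N (c t))
    (hderiv : ∀ t ∈ Set.Icc (0 : ℝ) T, ∀ k j,
      HasDerivWithinAt (fun s => c s k j) (d t k j) (Set.Icc (0 : ℝ) T) t)
    (hC1 : ∀ k j, ContinuousOn (fun s => d s k j) (Set.Icc (0 : ℝ) T))
    (heq : ∀ t ∈ Set.Icc (0 : ℝ) T, ∀ k j,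
      ((1 + α ^ (2 * r) * mu k ^ r : ℝ) : ℂ) * d t k j + ((ν * mu k : ℝ) : ℂ) * c t k j
        = - BN N (c t) k j) :
    ∀ t ∈ Set.Icc (0 : ℝ) T,
      l2sq N (c t) + α ^ (2 * r) * arsq N r (c t)
          + 2 * ν * ∫ s in (0 : ℝ)..t, arsq N 1 (c s)
        = l2sq N (c 0) + α ^ (2 * r) * arsq N r (c 0) := by
  set w : (Fin 3 → ℤ) → ℝ := fun k => 1 + α ^ (2 * r) * mu k ^ r with hw
  set F : ℝ → ℝ := fun t => ∑ k ∈ box N, ∑ j, w k * Complex.normSq (c t k j) with hF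
  -- F equals the energy
  have hFeq : ∀ t, F t = l2sq N (c t) + α ^ (2 * r) * arsq N r (c t) := by
    intro t
    simp only [hF, hw, l2sq, arsq, Finset.mul_sum, ← Finset.sum_add_distrib]
    refine Finset.sum_congr rfl fun k _ => ?_
    refine Finset.sum_congr rfl fun j _ => by ring
  -- derivative of F
  have hFderiv : ∀ t ∈ Set.Icc (0 : ℝ) T,
      HasDerivWithinAt F (-(2 * ν * arsq N 1 (c t))) (Set.Icc (0 : ℝ) T) t := by
    intro t ht
    have hD : HasDerivWithinAt F
        (∑ k ∈ box N, ∑ j, w k * (2 * ((starRingEnd ℂ (c t k j)) * d t k j).re))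
        (Set.Icc (0 : ℝ) T) t := by
      refine HasDerivWithinAt.fun_sum fun k _ => ?_
      refine HasDerivWithinAt.fun_sum fun j _ => ?_
      exact (hasDerivWithinAt_normSq' (hderiv t ht k j)).const_mul (w k)
    convert hD using 1
    -- identify the value
    have hval : (∑ k ∈ box N, ∑ j, w k * (2 * ((starRingEnd ℂ (c t k j)) * d t k j).re))
        = 2 * (∑ k ∈ box N, ∑ j,
            (starRingEnd ℂ (c t k j)) * (((w k : ℝ) : ℂ) * d t k j)).re := by
      rw [Complex.re_sum, Finset.mul_sum]
      refine Finset.sum_congr rfl fun k _ => ?_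
      rw [Complex.re_sum, Finset.mul_sum]
      refine Finset.sum_congr rfl fun j _ => ?_
      rw [show (starRingEnd ℂ (c t k j)) * (((w k : ℝ) : ℂ) * d t k j)
          = ((w k : ℝ) : ℂ) * ((starRingEnd ℂ (c t k j)) * d t k j) by ring]
      rw [Complex.re_ofReal_mul]
      ring
    rw [hval]
    have hsub : (∑ k ∈ box N, ∑ j, (starRingEnd ℂ (c t k j)) * (((w k : ℝ) : ℂ) * d t k j))
        = ((-(ν * arsq N 1 (c t)) : ℝ) : ℂ) := by
      have hstep : ∀ k ∈ box N, ∀ j, (starRingEnd ℂ (c t k j)) * (((w k : ℝ) : ℂ) * d t k j)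
          = -(((ν * mu k : ℝ) : ℂ) * ((Complex.normSq (c t k j) : ℝ) : ℂ))
            - (starRingEnd ℂ (c t k j)) * BN N (c t) k j := by
        intro k _ j
        have he := heq t ht k j
        have : ((w k : ℝ) : ℂ) * d t k j = - BN N (c t) k j - ((ν * mu k : ℝ) : ℂ) * c t k j := by
          rw [hw]; push_cast at he ⊢; linear_combination he
        rw [this]
        have hns : (starRingEnd ℂ (c t k j)) * c t k j = ((Complex.normSq (c t k j) : ℝ) : ℂ) := by
          rw [mul_comm, Complex.mul_conj]
        rw [mul_sub, mul_neg]
        linear_combination (-((ν * mu k : ℝ) : ℂ)) * hns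
      calc ∑ k ∈ box N, ∑ j, (starRingEnd ℂ (c t k j)) * (((w k : ℝ) : ℂ) * d t k j)
          = ∑ k ∈ box N, ∑ j, (-(((ν * mu k : ℝ) : ℂ) * ((Complex.normSq (c t k j) : ℝ) : ℂ))
              - (starRingEnd ℂ (c t k j)) * BN N (c t) k j) := by
            refine Finset.sum_congr rfl fun k hk => Finset.sum_congr rfl fun j _ => hstep k hk j
        _ = (∑ k ∈ box N, ∑ j, -(((ν * mu k : ℝ) : ℂ) * ((Complex.normSq (c t k j) : ℝ) : ℂ)))
              - ∑ k ∈ box N, ∑ j, (starRingEnd ℂ (c t k j)) * BN N (c t) k j := by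
            rw [← Finset.sum_sub_distrib]
            exact Finset.sum_congr rfl fun k _ => by rw [← Finset.sum_sub_distrib]
        _ = ((-(ν * arsq N 1 (c t)) : ℝ) : ℂ) := by
            rw [inner_BN_zero' N (c t) (hmem t ht), sub_zero]
            rw [show ((-(ν * arsq N 1 (c t)) : ℝ) : ℂ)
              = -((ν : ℂ) * ((arsq N 1 (c t) : ℝ) : ℂ)) by push_cast; ring]
            simp only [arsq]
            push_cast
            rw [Finset.mul_sum, ← Finset.sum_neg_distrib]
            refine Finset.sum_congr rfl fun k _ => ?_
            rw [Finset.mul_sum, Finset.mul_sum, ← Finset.sum_neg_distrib]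
            refine Finset.sum_congr rfl fun j _ => ?_
            rw [Real.rpow_one]
            push_cast
            ring
    rw [hsub, Complex.ofReal_re]
    ring
  -- continuity of c
  have hccont : ∀ k j, ContinuousOn (fun s => c s k j) (Set.Icc (0 : ℝ) T) :=
    fun k j x hx => (hderiv x hx k j).continuousWithinAt
  intro t ht
  obtain ⟨ht0, htT⟩ := ht
  have hsub : Set.Icc (0 : ℝ) t ⊆ Set.Icc (0 : ℝ) T :=
    Set.Icc_subset_Icc le_rfl htT
  have hicont : ContinuousOn (fun s => arsq N 1 (c s)) (Set.Icc (0 : ℝ) t) := by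
    refine continuousOn_finset_sum _ fun k _ => ?_
    refine ContinuousOn.mul continuousOn_const ?_
    refine continuousOn_finset_sum _ fun j _ => ?_
    exact Complex.continuous_normSq.comp_continuousOn ((hccont k j).mono hsub)
  have hint : IntervalIntegrable (fun s => arsq N 1 (c s)) MeasureTheory.volume 0 t := by
    apply ContinuousOn.intervalIntegrable
    rwa [Set.uIcc_of_le ht0]
  have hFTC : ∫ s in (0:ℝ)..t, (-(2 * ν * arsq N 1 (c s))) = F t - F 0 := by
    apply intervalIntegral.integral_eq_sub_of_hasDeriv_right_of_le ht0
    · intro x hx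
      exact ((hFderiv x (hsub hx)).continuousWithinAt).mono hsub
    · intro x hx
      have hxT : x ∈ Set.Icc (0:ℝ) T := hsub ⟨le_of_lt hx.1, le_of_lt hx.2⟩
      have := (hFderiv x hxT).hasDerivAt
        (Icc_mem_nhds hx.1 (lt_of_lt_of_le hx.2 htT))
      exact this.hasDerivWithinAt
    · have : (fun s => -(2 * ν * arsq N 1 (c s))) = fun s => (-(2*ν)) * arsq N 1 (c s) := by
        funext s; ring
      rw [this]
      exact hint.const_mul _
  have hFTC2 : F t - F 0 = -(2 * ν) * ∫ s in (0:ℝ)..t, arsq N 1 (c s) := by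
    rw [← hFTC, ← intervalIntegral.integral_const_mul]
    refine intervalIntegral.integral_congr fun s _ => by ring
  have := hFeq t
  have h0 := hFeq 0
  rw [← hFeq t, ← hFeq 0]
  linarith [hFTC2]
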